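/- Let n ≥ 4 be even, Q a quadratic bent function on 𝔽₂ⁿ, and fix indices i < j and c ∈ 𝔽₂ⁿ. Exactly one of the following holds for the four restricted Walsh values W_{Q|_{u,v}}(c̄), u,v ∈ 𝔽₂: (i) three of them are zero and the remaining one has absolute value 2^{n/2}, which happens iff ∏_{α,β∈𝔽₂} W_Q(c+αe_i+βe_j) = 2^{2n}; or (ii) all four have absolute value 2^{(n−2)/2} with three terms (−1)^{c_i u + c_j v} W_{Q|_{u,v}}(c̄) of one sign and one of the opposite sign, which happens iff ∏_{α,β∈𝔽₂} W_Q(c+αe_i+βe_j) = −2^{2n}. -/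
import Mathlib


open Finset

/-- Walsh–Hadamard transform (integer-valued) of a Boolean function over an
arbitrary finite index type. -/
def walshOn {ι : Type*} [Fintype ι] [DecidableEq ι]
    (f : (ι → ZMod 2) → ZMod 2) (c : ι → ZMod 2) : ℤ :=
  ∑ x : ι → ZMod 2, (-1 : ℤ) ^ ((f x + ∑ k, c k * x k).val)

/-- The quadratic function `Q_π(x) = ∑_{i=1}^{n-1} x_{π(i)} x_{π(i+1)}`
(0-indexed). -/
def Qperm (n : ℕ) (π : Equiv.Perm (Fin n)) (x : Fin n → ZMod 2) : ZMod 2 :=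
  ∑ i : Fin n, if h : (i : ℕ) + 1 < n then x (π i) * x (π ⟨(i : ℕ) + 1, h⟩) else 0

/-- A Boolean function on `𝔽₂ⁿ` is bent if its Walsh spectrum is `{±2^(n/2)}`. -/
def IsBent (n : ℕ) (f : (Fin n → ZMod 2) → ZMod 2) : Prop :=
  ∀ c, walshOn f c = 2 ^ (n / 2) ∨ walshOn f c = -2 ^ (n / 2)

/-- A Boolean function on `𝔽₂ⁿ` is near-bent if its Walsh spectrum is
`{0, ±2^((n+1)/2)}`. -/
def IsNearBent (n : ℕ) (f : (Fin n → ZMod 2) → ZMod 2) : Prop :=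
  ∀ c, walshOn f c = 0 ∨ walshOn f c = 2 ^ ((n + 1) / 2) ∨
    walshOn f c = -(2 ^ ((n + 1) / 2))

/-- The reverse of a permutation: `π̃(i) = π(n+1-i)` (1-indexed). -/
def reversePerm (n : ℕ) (π : Equiv.Perm (Fin n)) : Equiv.Perm (Fin n) :=
  Fin.revPerm.trans π

/-- Restriction of a Boolean function on `𝔽₂ⁿ` to the flat `x_i = u, x_j = v`,
viewed as a function on the remaining `n - 2` coordinates. -/
def restrictQ (n : ℕ) (Q : (Fin n → ZMod 2) → ZMod 2) (i j : Fin n) (u v : ZMod 2)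
    (y : {k : Fin n // k ≠ i ∧ k ≠ j} → ZMod 2) : ZMod 2 :=
  Q (fun k => if h1 : k = i then u else if h2 : k = j then v else y ⟨k, ⟨h1, h2⟩⟩)

/-- The `i`-th standard basis vector of `𝔽₂ⁿ`. -/
def eVec (n : ℕ) (i : Fin n) : Fin n → ZMod 2 := Pi.single i 1
lemma keyA (x a b c d : ℤ) (hx : 0 < x)
    (h00 : a+b+c+d = 2*x ∨ a+b+c+d = -(2*x))
    (h01 : a-b+c-d = 2*x ∨ a-b+c-d = -(2*x))
    (h10 : a+b-c-d = 2*x ∨ a+b-c-d = -(2*x))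
    (h11 : a-b-c+d = 2*x ∨ a-b-c+d = -(2*x)) :
    (((a = 2*x ∨ a = -(2*x)) ∧ b = 0 ∧ c = 0 ∧ d = 0)
     ∨ ((b = 2*x ∨ b = -(2*x)) ∧ a = 0 ∧ c = 0 ∧ d = 0)
     ∨ ((c = 2*x ∨ c = -(2*x)) ∧ a = 0 ∧ b = 0 ∧ d = 0)
     ∨ ((d = 2*x ∨ d = -(2*x)) ∧ a = 0 ∧ b = 0 ∧ c = 0))
    ∨ ((a = x ∨ a = -x) ∧ (b = x ∨ b = -x) ∧ (c = x ∨ c = -x) ∧ (d = x ∨ d = -x)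
       ∧ ((a < 0 ∧ 0 < b ∧ 0 < c ∧ 0 < d) ∨ (0 < a ∧ b < 0 ∧ 0 < c ∧ 0 < d)
        ∨ (0 < a ∧ 0 < b ∧ c < 0 ∧ 0 < d) ∨ (0 < a ∧ 0 < b ∧ 0 < c ∧ d < 0)
        ∨ (0 < a ∧ b < 0 ∧ c < 0 ∧ d < 0) ∨ (a < 0 ∧ 0 < b ∧ c < 0 ∧ d < 0)
        ∨ (a < 0 ∧ b < 0 ∧ 0 < c ∧ d < 0) ∨ (a < 0 ∧ b < 0 ∧ c < 0 ∧ 0 < d))) := by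
  rcases h00 with h00 | h00 <;> rcases h01 with h01 | h01 <;>
    rcases h10 with h10 | h10 <;> rcases h11 with h11 | h11
  · have ha : a = 2*x := by omega
    have hb : b = 0 := by omega
    have hc : c = 0 := by omega
    have hd : d = 0 := by omega
    exact Or.inl (Or.inl ⟨Or.inl ha, hb, hc, hd⟩)
  · have ha : a = x := by omega
    have hb : b = x := by omega
    have hc : c = x := by omega
    have hd : d = -x := by omega
    exact Or.inr ⟨Or.inl ha, Or.inl hb, Or.inl hc, Or.inr hd, Or.inr (Or.inr (Or.inr (Or.inl ⟨by omega, by omega, by omega, by omega⟩)))⟩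
  · have ha : a = x := by omega
    have hb : b = -x := by omega
    have hc : c = x := by omega
    have hd : d = x := by omega
    exact Or.inr ⟨Or.inl ha, Or.inr hb, Or.inl hc, Or.inl hd, Or.inr (Or.inl ⟨by omega, by omega, by omega, by omega⟩)⟩
  · have ha : a = 0 := by omega
    have hb : b = 0 := by omega
    have hc : c = 2*x := by omega
    have hd : d = 0 := by omega
    exact Or.inl (Or.inr (Or.inr (Or.inl ⟨Or.inl hc, ha, hb, hd⟩)))
  · have ha : a = x := by omega
    have hb : b = x := by omega
    have hc : c = -x := by omega
    have hd : d = x := by omega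
    exact Or.inr ⟨Or.inl ha, Or.inl hb, Or.inr hc, Or.inl hd, Or.inr (Or.inr (Or.inl ⟨by omega, by omega, by omega, by omega⟩))⟩
  · have ha : a = 0 := by omega
    have hb : b = 2*x := by omega
    have hc : c = 0 := by omega
    have hd : d = 0 := by omega
    exact Or.inl (Or.inr (Or.inl ⟨Or.inl hb, ha, hc, hd⟩))
  · have ha : a = 0 := by omega
    have hb : b = 0 := by omega
    have hc : c = 0 := by omega
    have hd : d = 2*x := by omega
    exact Or.inl (Or.inr (Or.inr (Or.inr (⟨Or.inl hd, ha, hb, hc⟩))))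
  · have ha : a = -x := by omega
    have hb : b = x := by omega
    have hc : c = x := by omega
    have hd : d = x := by omega
    exact Or.inr ⟨Or.inr ha, Or.inl hb, Or.inl hc, Or.inl hd, Or.inl ⟨by omega, by omega, by omega, by omega⟩⟩
  · have ha : a = x := by omega
    have hb : b = -x := by omega
    have hc : c = -x := by omega
    have hd : d = -x := by omega
    exact Or.inr ⟨Or.inl ha, Or.inr hb, Or.inr hc, Or.inr hd, Or.inr (Or.inr (Or.inr (Or.inr (Or.inl ⟨by omega, by omega, by omega, by omega⟩))))⟩
  · have ha : a = 0 := by omega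
    have hb : b = 0 := by omega
    have hc : c = 0 := by omega
    have hd : d = -(2*x) := by omega
    exact Or.inl (Or.inr (Or.inr (Or.inr (⟨Or.inr hd, ha, hb, hc⟩))))
  · have ha : a = 0 := by omega
    have hb : b = -(2*x) := by omega
    have hc : c = 0 := by omega
    have hd : d = 0 := by omega
    exact Or.inl (Or.inr (Or.inl ⟨Or.inr hb, ha, hc, hd⟩))
  · have ha : a = -x := by omega
    have hb : b = -x := by omega
    have hc : c = x := by omega
    have hd : d = -x := by omega
    exact Or.inr ⟨Or.inr ha, Or.inr hb, Or.inl hc, Or.inr hd, Or.inr (Or.inr (Or.inr (Or.inr (Or.inr (Or.inr (Or.inl ⟨by omega, by omega, by omega, by omega⟩))))))⟩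
  · have ha : a = 0 := by omega
    have hb : b = 0 := by omega
    have hc : c = -(2*x) := by omega
    have hd : d = 0 := by omega
    exact Or.inl (Or.inr (Or.inr (Or.inl ⟨Or.inr hc, ha, hb, hd⟩)))
  · have ha : a = -x := by omega
    have hb : b = x := by omega
    have hc : c = -x := by omega
    have hd : d = -x := by omega
    exact Or.inr ⟨Or.inr ha, Or.inl hb, Or.inr hc, Or.inr hd, Or.inr (Or.inr (Or.inr (Or.inr (Or.inr (Or.inl ⟨by omega, by omega, by omega, by omega⟩)))))⟩
  · have ha : a = -x := by omega
    have hb : b = -x := by omega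
    have hc : c = -x := by omega
    have hd : d = x := by omega
    exact Or.inr ⟨Or.inr ha, Or.inr hb, Or.inr hc, Or.inl hd, Or.inr (Or.inr (Or.inr (Or.inr (Or.inr (Or.inr (Or.inr (⟨by omega, by omega, by omega, by omega⟩)))))))⟩
  · have ha : a = -(2*x) := by omega
    have hb : b = 0 := by omega
    have hc : c = 0 := by omega
    have hd : d = 0 := by omega
    exact Or.inl (Or.inl ⟨Or.inr ha, hb, hc, hd⟩)
lemma chi_add (a b : ZMod 2) : ((-1:ℤ))^((a+b).val) = (-1)^a.val * (-1)^b.val := by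
  revert a b; decide

lemma sum_split (n : ℕ) (i j : Fin n) (hij : i ≠ j) (g : Fin n → ZMod 2) :
    ∑ k, g k = g i + g j + ∑ k : {k : Fin n // k ≠ i ∧ k ≠ j}, g k.1 := by
  have h1 : ∑ k : {k : Fin n // k ≠ i ∧ k ≠ j}, g k.1
      = ∑ k ∈ ({i, j} : Finset (Fin n))ᶜ, g k :=
    (Finset.sum_subtype _ (fun x => by simp [not_or]) g).symm
  rw [h1, ← Finset.sum_compl_add_sum ({i, j} : Finset (Fin n)) g,
    Finset.sum_pair hij]
  ring

def glueEquiv (n : ℕ) (i j : Fin n) (hij : i ≠ j) :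
    (ZMod 2 × ZMod 2 × ({k : Fin n // k ≠ i ∧ k ≠ j} → ZMod 2)) ≃ (Fin n → ZMod 2) where
  toFun z := fun k => if h1 : k = i then z.1 else if h2 : k = j then z.2.1 else z.2.2 ⟨k, ⟨h1, h2⟩⟩
  invFun x := (x i, x j, fun k => x k.1)
  left_inv := by
    rintro ⟨u, v, y⟩
    refine Prod.ext ?_ (Prod.ext ?_ ?_)
    · simp
    · simp [hij.symm]
    · funext k; simp [k.2.1, k.2.2]
  right_inv := by
    intro x; funext k
    by_cases h1 : k = i
    · subst h1; simp
    · by_cases h2 : k = j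
      · subst h2; simp [h1]
      · simp [h1, h2]

lemma walsh_decomp (n : ℕ) (f : (Fin n → ZMod 2) → ZMod 2) (i j : Fin n) (hij : i ≠ j)
    (c : Fin n → ZMod 2) :
    walshOn f c = ∑ u : ZMod 2, ∑ v : ZMod 2,
      (-1:ℤ)^((c i * u + c j * v).val) * walshOn (restrictQ n f i j u v) (fun k => c k.1) := by
  have hrhs : ∀ u v : ZMod 2,
      (-1:ℤ)^((c i * u + c j * v).val) * walshOn (restrictQ n f i j u v) (fun k => c k.1)
      = ∑ y : {k : Fin n // k ≠ i ∧ k ≠ j} → ZMod 2,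
          (-1:ℤ)^((f (glueEquiv n i j hij (u,v,y)) + ∑ k, c k * (glueEquiv n i j hij (u,v,y)) k).val) := by
    intro u v
    rw [walshOn, Finset.mul_sum]
    refine Finset.sum_congr rfl fun y _ => ?_
    have hglue_i : (glueEquiv n i j hij (u,v,y)) i = u := by simp [glueEquiv]
    have hglue_j : (glueEquiv n i j hij (u,v,y)) j = v := by simp [glueEquiv, hij.symm]
    have hglue_k : ∀ k : {k : Fin n // k ≠ i ∧ k ≠ j}, (glueEquiv n i j hij (u,v,y)) k.1 = y k := by
      intro k; simp [glueEquiv, k.2.1, k.2.2]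
    have hres : restrictQ n f i j u v y = f (glueEquiv n i j hij (u,v,y)) := rfl
    have hsum : ∑ k, c k * (glueEquiv n i j hij (u,v,y)) k
        = c i * u + c j * v + ∑ k : {k : Fin n // k ≠ i ∧ k ≠ j}, c k.1 * y k := by
      rw [sum_split n i j hij, hglue_i, hglue_j]
      congr 1
      exact Finset.sum_congr rfl fun k _ => by rw [hglue_k]
    rw [hsum, hres, ← chi_add]
    congr 1
    ring_nf
  calc walshOn f c
      = ∑ z : ZMod 2 × ZMod 2 × ({k : Fin n // k ≠ i ∧ k ≠ j} → ZMod 2),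
          (-1:ℤ)^((f (glueEquiv n i j hij z) + ∑ k, c k * (glueEquiv n i j hij z) k).val) :=
        (Equiv.sum_comp (glueEquiv n i j hij)
          (fun x => (-1:ℤ)^((f x + ∑ k, c k * x k).val))).symm
    _ = _ := by
        rw [Fintype.sum_prod_type]
        refine Finset.sum_congr rfl fun u _ => ?_
        rw [Fintype.sum_prod_type]
        refine Finset.sum_congr rfl fun v _ => ?_
        rw [hrhs]

lemma pair_cases (p : ZMod 2 × ZMod 2) :
    p = (0,0) ∨ p = (0,1) ∨ p = (1,0) ∨ p = (1,1) := by revert p; decide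

lemma exists_ne_pair (p : ZMod 2 × ZMod 2) : ∃ q : ZMod 2 × ZMod 2, q ≠ p := by
  rcases pair_cases p with rfl|rfl|rfl|rfl
  exacts [⟨(1,1), by decide⟩, ⟨(1,0), by decide⟩, ⟨(0,1), by decide⟩, ⟨(0,0), by decide⟩]

lemma sumZ {M : Type*} [AddCommMonoid M] (g : ZMod 2 → M) :
    ∑ x : ZMod 2, g x = g 0 + g 1 := by
  rw [show (Finset.univ : Finset (ZMod 2)) = {0, 1} by decide, Finset.sum_pair (by decide)]

lemma prodZ {M : Type*} [CommMonoid M] (g : ZMod 2 → M) :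
    ∏ x : ZMod 2, g x = g 0 * g 1 := by
  rw [show (Finset.univ : Finset (ZMod 2)) = {0, 1} by decide, Finset.prod_pair (by decide)]

set_option maxHeartbeats 3000000 in
lemma abstract_dichotomy (x : ℤ) (hx : 0 < x)
    (W κ : ZMod 2 × ZMod 2 → ℤ)
    (hκ : ∀ p, κ p = 1 ∨ κ p = -1)
    (T : ZMod 2 → ZMod 2 → ℤ)
    (h00 : T 0 0 = (κ (0,0) * W (0,0) + κ (0,1) * W (0,1)) + (κ (1,0) * W (1,0) + κ (1,1) * W (1,1)))
    (h01 : T 0 1 = (κ (0,0) * W (0,0) - κ (0,1) * W (0,1)) + (κ (1,0) * W (1,0) - κ (1,1) * W (1,1)))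
    (h10 : T 1 0 = (κ (0,0) * W (0,0) + κ (0,1) * W (0,1)) - (κ (1,0) * W (1,0) + κ (1,1) * W (1,1)))
    (h11 : T 1 1 = (κ (0,0) * W (0,0) - κ (0,1) * W (0,1)) - (κ (1,0) * W (1,0) - κ (1,1) * W (1,1)))
    (hbent : ∀ α β : ZMod 2, T α β = 2*x ∨ T α β = -(2*x)) :
    ((∃ p : ZMod 2 × ZMod 2, W p ^ 2 = 4*x^2 ∧ ∀ q : ZMod 2 × ZMod 2, q ≠ p → W q = 0) ↔
        T 0 0 * T 0 1 * (T 1 0 * T 1 1) = 16*x^4) ∧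
    (((∀ p : ZMod 2 × ZMod 2, W p ^ 2 = x^2) ∧
      ((Finset.univ.filter (fun p : ZMod 2 × ZMod 2 => κ p * W p < 0)).card = 1 ∨
       (Finset.univ.filter (fun p : ZMod 2 × ZMod 2 => κ p * W p < 0)).card = 3)) ↔
        T 0 0 * T 0 1 * (T 1 0 * T 1 1) = -(16*x^4)) ∧
    (T 0 0 * T 0 1 * (T 1 0 * T 1 1) = 16*x^4 ∨
     T 0 0 * T 0 1 * (T 1 0 * T 1 1) = -(16*x^4)) := by
  have hgad : ∀ p : ZMod 2 × ZMod 2, W p ^ 2 = (κ p * W p) ^ 2 := by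
    intro p; rcases hκ p with hk|hk <;> rw [hk] <;> ring
  have hne16 : ¬((16:ℤ)*x^4 = -(16*x^4)) := by nlinarith [pow_pos hx 4]
  have hcs : (Finset.univ.filter (fun p : ZMod 2 × ZMod 2 => κ p * W p < 0)).card
      = ((if κ (0,0) * W (0,0) < 0 then 1 else 0) + (if κ (0,1) * W (0,1) < 0 then 1 else 0))
        + ((if κ (1,0) * W (1,0) < 0 then 1 else 0) + (if κ (1,1) * W (1,1) < 0 then 1 else 0)) := by
    rw [Finset.card_filter]
    simp only [Fintype.sum_prod_type, sumZ]
  have e00 : (κ (0,0) * W (0,0)) + (κ (0,1) * W (0,1)) + (κ (1,0) * W (1,0)) + (κ (1,1) * W (1,1)) = 2*x ∨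
      (κ (0,0) * W (0,0)) + (κ (0,1) * W (0,1)) + (κ (1,0) * W (1,0)) + (κ (1,1) * W (1,1)) = -(2*x) := by
    rcases hbent 0 0 with h|h <;> rw [h00] at h
    · left; linarith
    · right; linarith
  have e01 : (κ (0,0) * W (0,0)) - (κ (0,1) * W (0,1)) + (κ (1,0) * W (1,0)) - (κ (1,1) * W (1,1)) = 2*x ∨
      (κ (0,0) * W (0,0)) - (κ (0,1) * W (0,1)) + (κ (1,0) * W (1,0)) - (κ (1,1) * W (1,1)) = -(2*x) := by
    rcases hbent 0 1 with h|h <;> rw [h01] at h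
    · left; linarith
    · right; linarith
  have e10 : (κ (0,0) * W (0,0)) + (κ (0,1) * W (0,1)) - (κ (1,0) * W (1,0)) - (κ (1,1) * W (1,1)) = 2*x ∨
      (κ (0,0) * W (0,0)) + (κ (0,1) * W (0,1)) - (κ (1,0) * W (1,0)) - (κ (1,1) * W (1,1)) = -(2*x) := by
    rcases hbent 1 0 with h|h <;> rw [h10] at h
    · left; linarith
    · right; linarith
  have e11 : (κ (0,0) * W (0,0)) - (κ (0,1) * W (0,1)) - (κ (1,0) * W (1,0)) + (κ (1,1) * W (1,1)) = 2*x ∨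
      (κ (0,0) * W (0,0)) - (κ (0,1) * W (0,1)) - (κ (1,0) * W (1,0)) + (κ (1,1) * W (1,1)) = -(2*x) := by
    rcases hbent 1 1 with h|h <;> rw [h11] at h
    · left; linarith
    · right; linarith
  rcases keyA x _ _ _ _ hx e00 e01 e10 e11 with
    (⟨hval, hz1, hz2, hz3⟩|⟨hval, hz1, hz2, hz3⟩|⟨hval, hz1, hz2, hz3⟩|⟨hval, hz1, hz2, hz3⟩) |
    ⟨hA, hB, hC, hD, hpat⟩
  · have hz : ∀ q : ZMod 2 × ZMod 2, q ≠ ((0,0) : ZMod 2 × ZMod 2) → κ q * W q = 0 := by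
      intro q hq
      rcases pair_cases q with rfl|rfl|rfl|rfl
      · exact absurd rfl hq
      · exact hz1
      · exact hz2
      · exact hz3
    have hW0 : ∀ q : ZMod 2 × ZMod 2, q ≠ ((0,0) : ZMod 2 × ZMod 2) → W q = 0 := by
      intro q hq
      have h := hz q hq
      rcases hκ q with hk|hk <;> rw [hk] at h <;> linarith
    have hWsq : W (0,0) ^ 2 = 4*x^2 := by
      rw [hgad]
      rcases hval with h|h <;> rw [h] <;> ring
    have hProd : T 0 0 * T 0 1 * (T 1 0 * T 1 1) = 16*x^4 := by
      rw [h00, h01, h10, h11, hz1, hz2, hz3]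
      rcases hval with h|h <;> rw [h] <;> ring
    have hnot2 : ¬(∀ p : ZMod 2 × ZMod 2, W p ^ 2 = x^2) := by
      intro hall
      obtain ⟨q, hq⟩ := exists_ne_pair ((0,0) : ZMod 2 × ZMod 2)
      have h := hall q
      rw [hW0 q hq] at h
      nlinarith
    exact ⟨⟨fun _ => hProd, fun _ => ⟨(0,0), hWsq, hW0⟩⟩,
      ⟨fun h2 => (hnot2 h2.1).elim, fun hm => absurd (hProd.symm.trans hm) hne16⟩,
      Or.inl hProd⟩
  · have hz : ∀ q : ZMod 2 × ZMod 2, q ≠ ((0,1) : ZMod 2 × ZMod 2) → κ q * W q = 0 := by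
      intro q hq
      rcases pair_cases q with rfl|rfl|rfl|rfl
      · exact hz1
      · exact absurd rfl hq
      · exact hz2
      · exact hz3
    have hW0 : ∀ q : ZMod 2 × ZMod 2, q ≠ ((0,1) : ZMod 2 × ZMod 2) → W q = 0 := by
      intro q hq
      have h := hz q hq
      rcases hκ q with hk|hk <;> rw [hk] at h <;> linarith
    have hWsq : W (0,1) ^ 2 = 4*x^2 := by
      rw [hgad]
      rcases hval with h|h <;> rw [h] <;> ring
    have hProd : T 0 0 * T 0 1 * (T 1 0 * T 1 1) = 16*x^4 := by
      rw [h00, h01, h10, h11, hz1, hz2, hz3]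
      rcases hval with h|h <;> rw [h] <;> ring
    have hnot2 : ¬(∀ p : ZMod 2 × ZMod 2, W p ^ 2 = x^2) := by
      intro hall
      obtain ⟨q, hq⟩ := exists_ne_pair ((0,1) : ZMod 2 × ZMod 2)
      have h := hall q
      rw [hW0 q hq] at h
      nlinarith
    exact ⟨⟨fun _ => hProd, fun _ => ⟨(0,1), hWsq, hW0⟩⟩,
      ⟨fun h2 => (hnot2 h2.1).elim, fun hm => absurd (hProd.symm.trans hm) hne16⟩,
      Or.inl hProd⟩
  · have hz : ∀ q : ZMod 2 × ZMod 2, q ≠ ((1,0) : ZMod 2 × ZMod 2) → κ q * W q = 0 := by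
      intro q hq
      rcases pair_cases q with rfl|rfl|rfl|rfl
      · exact hz1
      · exact hz2
      · exact absurd rfl hq
      · exact hz3
    have hW0 : ∀ q : ZMod 2 × ZMod 2, q ≠ ((1,0) : ZMod 2 × ZMod 2) → W q = 0 := by
      intro q hq
      have h := hz q hq
      rcases hκ q with hk|hk <;> rw [hk] at h <;> linarith
    have hWsq : W (1,0) ^ 2 = 4*x^2 := by
      rw [hgad]
      rcases hval with h|h <;> rw [h] <;> ring
    have hProd : T 0 0 * T 0 1 * (T 1 0 * T 1 1) = 16*x^4 := by
      rw [h00, h01, h10, h11, hz1, hz2, hz3]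
      rcases hval with h|h <;> rw [h] <;> ring
    have hnot2 : ¬(∀ p : ZMod 2 × ZMod 2, W p ^ 2 = x^2) := by
      intro hall
      obtain ⟨q, hq⟩ := exists_ne_pair ((1,0) : ZMod 2 × ZMod 2)
      have h := hall q
      rw [hW0 q hq] at h
      nlinarith
    exact ⟨⟨fun _ => hProd, fun _ => ⟨(1,0), hWsq, hW0⟩⟩,
      ⟨fun h2 => (hnot2 h2.1).elim, fun hm => absurd (hProd.symm.trans hm) hne16⟩,
      Or.inl hProd⟩
  · have hz : ∀ q : ZMod 2 × ZMod 2, q ≠ ((1,1) : ZMod 2 × ZMod 2) → κ q * W q = 0 := by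
      intro q hq
      rcases pair_cases q with rfl|rfl|rfl|rfl
      · exact hz1
      · exact hz2
      · exact hz3
      · exact absurd rfl hq
    have hW0 : ∀ q : ZMod 2 × ZMod 2, q ≠ ((1,1) : ZMod 2 × ZMod 2) → W q = 0 := by
      intro q hq
      have h := hz q hq
      rcases hκ q with hk|hk <;> rw [hk] at h <;> linarith
    have hWsq : W (1,1) ^ 2 = 4*x^2 := by
      rw [hgad]
      rcases hval with h|h <;> rw [h] <;> ring
    have hProd : T 0 0 * T 0 1 * (T 1 0 * T 1 1) = 16*x^4 := by
      rw [h00, h01, h10, h11, hz1, hz2, hz3]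
      rcases hval with h|h <;> rw [h] <;> ring
    have hnot2 : ¬(∀ p : ZMod 2 × ZMod 2, W p ^ 2 = x^2) := by
      intro hall
      obtain ⟨q, hq⟩ := exists_ne_pair ((1,1) : ZMod 2 × ZMod 2)
      have h := hall q
      rw [hW0 q hq] at h
      nlinarith
    exact ⟨⟨fun _ => hProd, fun _ => ⟨(1,1), hWsq, hW0⟩⟩,
      ⟨fun h2 => (hnot2 h2.1).elim, fun hm => absurd (hProd.symm.trans hm) hne16⟩,
      Or.inl hProd⟩
  · rcases hpat with ⟨p1,p2,p3,p4⟩|⟨p1,p2,p3,p4⟩|⟨p1,p2,p3,p4⟩|⟨p1,p2,p3,p4⟩|⟨p1,p2,p3,p4⟩|⟨p1,p2,p3,p4⟩|⟨p1,p2,p3,p4⟩|⟨p1,p2,p3,p4⟩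
    · have ha' : κ (0,0) * W (0,0) = -x := by rcases hA with h|h <;> linarith
      have hb' : κ (0,1) * W (0,1) = x := by rcases hB with h|h <;> linarith
      have hc' : κ (1,0) * W (1,0) = x := by rcases hC with h|h <;> linarith
      have hd' : κ (1,1) * W (1,1) = x := by rcases hD with h|h <;> linarith
      have hallsq : ∀ p : ZMod 2 × ZMod 2, W p ^ 2 = x^2 := by
        intro p
        rw [hgad]
        rcases pair_cases p with rfl|rfl|rfl|rfl
        · rw [ha']; try ring
        · rw [hb']; try ring
        · rw [hc']; try ring
        · rw [hd']; try ring
      have hProd : T 0 0 * T 0 1 * (T 1 0 * T 1 1) = -(16*x^4) := by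
        rw [h00, h01, h10, h11, ha', hb', hc', hd']; ring
      have hcard : (Finset.univ.filter (fun p : ZMod 2 × ZMod 2 => κ p * W p < 0)).card = 1 := by
        have i1 : (if κ (0,0) * W (0,0) < 0 then (1:ℕ) else 0) = 1 := if_pos p1
        have i2 : (if κ (0,1) * W (0,1) < 0 then (1:ℕ) else 0) = 0 := if_neg (by linarith)
        have i3 : (if κ (1,0) * W (1,0) < 0 then (1:ℕ) else 0) = 0 := if_neg (by linarith)
        have i4 : (if κ (1,1) * W (1,1) < 0 then (1:ℕ) else 0) = 0 := if_neg (by linarith)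
        rw [hcs, i1, i2, i3, i4]
      have hnot1 : ¬(∃ p : ZMod 2 × ZMod 2, W p ^ 2 = 4*x^2 ∧
          ∀ q : ZMod 2 × ZMod 2, q ≠ p → W q = 0) := by
        rintro ⟨p, _, hzz⟩
        obtain ⟨q, hq⟩ := exists_ne_pair p
        have h := hallsq q
        rw [hzz q hq] at h
        nlinarith
      exact ⟨⟨fun h1 => (hnot1 h1).elim,
          fun hp => absurd (hProd.symm.trans hp) (by nlinarith [pow_pos hx 4])⟩,
        ⟨fun _ => hProd, fun _ => ⟨hallsq, Or.inl hcard⟩⟩,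
        Or.inr hProd⟩
    · have ha' : κ (0,0) * W (0,0) = x := by rcases hA with h|h <;> linarith
      have hb' : κ (0,1) * W (0,1) = -x := by rcases hB with h|h <;> linarith
      have hc' : κ (1,0) * W (1,0) = x := by rcases hC with h|h <;> linarith
      have hd' : κ (1,1) * W (1,1) = x := by rcases hD with h|h <;> linarith
      have hallsq : ∀ p : ZMod 2 × ZMod 2, W p ^ 2 = x^2 := by
        intro p
        rw [hgad]
        rcases pair_cases p with rfl|rfl|rfl|rfl
        · rw [ha']; try ring
        · rw [hb']; try ring
        · rw [hc']; try ring
        · rw [hd']; try ring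
      have hProd : T 0 0 * T 0 1 * (T 1 0 * T 1 1) = -(16*x^4) := by
        rw [h00, h01, h10, h11, ha', hb', hc', hd']; ring
      have hcard : (Finset.univ.filter (fun p : ZMod 2 × ZMod 2 => κ p * W p < 0)).card = 1 := by
        have i1 : (if κ (0,0) * W (0,0) < 0 then (1:ℕ) else 0) = 0 := if_neg (by linarith)
        have i2 : (if κ (0,1) * W (0,1) < 0 then (1:ℕ) else 0) = 1 := if_pos p2
        have i3 : (if κ (1,0) * W (1,0) < 0 then (1:ℕ) else 0) = 0 := if_neg (by linarith)
        have i4 : (if κ (1,1) * W (1,1) < 0 then (1:ℕ) else 0) = 0 := if_neg (by linarith)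
        rw [hcs, i1, i2, i3, i4]
      have hnot1 : ¬(∃ p : ZMod 2 × ZMod 2, W p ^ 2 = 4*x^2 ∧
          ∀ q : ZMod 2 × ZMod 2, q ≠ p → W q = 0) := by
        rintro ⟨p, _, hzz⟩
        obtain ⟨q, hq⟩ := exists_ne_pair p
        have h := hallsq q
        rw [hzz q hq] at h
        nlinarith
      exact ⟨⟨fun h1 => (hnot1 h1).elim,
          fun hp => absurd (hProd.symm.trans hp) (by nlinarith [pow_pos hx 4])⟩,
        ⟨fun _ => hProd, fun _ => ⟨hallsq, Or.inl hcard⟩⟩,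
        Or.inr hProd⟩
    · have ha' : κ (0,0) * W (0,0) = x := by rcases hA with h|h <;> linarith
      have hb' : κ (0,1) * W (0,1) = x := by rcases hB with h|h <;> linarith
      have hc' : κ (1,0) * W (1,0) = -x := by rcases hC with h|h <;> linarith
      have hd' : κ (1,1) * W (1,1) = x := by rcases hD with h|h <;> linarith
      have hallsq : ∀ p : ZMod 2 × ZMod 2, W p ^ 2 = x^2 := by
        intro p
        rw [hgad]
        rcases pair_cases p with rfl|rfl|rfl|rfl
        · rw [ha']; try ring
        · rw [hb']; try ring
        · rw [hc']; try ring
        · rw [hd']; try ring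
      have hProd : T 0 0 * T 0 1 * (T 1 0 * T 1 1) = -(16*x^4) := by
        rw [h00, h01, h10, h11, ha', hb', hc', hd']; ring
      have hcard : (Finset.univ.filter (fun p : ZMod 2 × ZMod 2 => κ p * W p < 0)).card = 1 := by
        have i1 : (if κ (0,0) * W (0,0) < 0 then (1:ℕ) else 0) = 0 := if_neg (by linarith)
        have i2 : (if κ (0,1) * W (0,1) < 0 then (1:ℕ) else 0) = 0 := if_neg (by linarith)
        have i3 : (if κ (1,0) * W (1,0) < 0 then (1:ℕ) else 0) = 1 := if_pos p3
        have i4 : (if κ (1,1) * W (1,1) < 0 then (1:ℕ) else 0) = 0 := if_neg (by linarith)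
        rw [hcs, i1, i2, i3, i4]
      have hnot1 : ¬(∃ p : ZMod 2 × ZMod 2, W p ^ 2 = 4*x^2 ∧
          ∀ q : ZMod 2 × ZMod 2, q ≠ p → W q = 0) := by
        rintro ⟨p, _, hzz⟩
        obtain ⟨q, hq⟩ := exists_ne_pair p
        have h := hallsq q
        rw [hzz q hq] at h
        nlinarith
      exact ⟨⟨fun h1 => (hnot1 h1).elim,
          fun hp => absurd (hProd.symm.trans hp) (by nlinarith [pow_pos hx 4])⟩,
        ⟨fun _ => hProd, fun _ => ⟨hallsq, Or.inl hcard⟩⟩,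
        Or.inr hProd⟩
    · have ha' : κ (0,0) * W (0,0) = x := by rcases hA with h|h <;> linarith
      have hb' : κ (0,1) * W (0,1) = x := by rcases hB with h|h <;> linarith
      have hc' : κ (1,0) * W (1,0) = x := by rcases hC with h|h <;> linarith
      have hd' : κ (1,1) * W (1,1) = -x := by rcases hD with h|h <;> linarith
      have hallsq : ∀ p : ZMod 2 × ZMod 2, W p ^ 2 = x^2 := by
        intro p
        rw [hgad]
        rcases pair_cases p with rfl|rfl|rfl|rfl
        · rw [ha']; try ring
        · rw [hb']; try ring
        · rw [hc']; try ring
        · rw [hd']; try ring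
      have hProd : T 0 0 * T 0 1 * (T 1 0 * T 1 1) = -(16*x^4) := by
        rw [h00, h01, h10, h11, ha', hb', hc', hd']; ring
      have hcard : (Finset.univ.filter (fun p : ZMod 2 × ZMod 2 => κ p * W p < 0)).card = 1 := by
        have i1 : (if κ (0,0) * W (0,0) < 0 then (1:ℕ) else 0) = 0 := if_neg (by linarith)
        have i2 : (if κ (0,1) * W (0,1) < 0 then (1:ℕ) else 0) = 0 := if_neg (by linarith)
        have i3 : (if κ (1,0) * W (1,0) < 0 then (1:ℕ) else 0) = 0 := if_neg (by linarith)
        have i4 : (if κ (1,1) * W (1,1) < 0 then (1:ℕ) else 0) = 1 := if_pos p4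
        rw [hcs, i1, i2, i3, i4]
      have hnot1 : ¬(∃ p : ZMod 2 × ZMod 2, W p ^ 2 = 4*x^2 ∧
          ∀ q : ZMod 2 × ZMod 2, q ≠ p → W q = 0) := by
        rintro ⟨p, _, hzz⟩
        obtain ⟨q, hq⟩ := exists_ne_pair p
        have h := hallsq q
        rw [hzz q hq] at h
        nlinarith
      exact ⟨⟨fun h1 => (hnot1 h1).elim,
          fun hp => absurd (hProd.symm.trans hp) (by nlinarith [pow_pos hx 4])⟩,
        ⟨fun _ => hProd, fun _ => ⟨hallsq, Or.inl hcard⟩⟩,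
        Or.inr hProd⟩
    · have ha' : κ (0,0) * W (0,0) = x := by rcases hA with h|h <;> linarith
      have hb' : κ (0,1) * W (0,1) = -x := by rcases hB with h|h <;> linarith
      have hc' : κ (1,0) * W (1,0) = -x := by rcases hC with h|h <;> linarith
      have hd' : κ (1,1) * W (1,1) = -x := by rcases hD with h|h <;> linarith
      have hallsq : ∀ p : ZMod 2 × ZMod 2, W p ^ 2 = x^2 := by
        intro p
        rw [hgad]
        rcases pair_cases p with rfl|rfl|rfl|rfl
        · rw [ha']; try ring
        · rw [hb']; try ring
        · rw [hc']; try ring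
        · rw [hd']; try ring
      have hProd : T 0 0 * T 0 1 * (T 1 0 * T 1 1) = -(16*x^4) := by
        rw [h00, h01, h10, h11, ha', hb', hc', hd']; ring
      have hcard : (Finset.univ.filter (fun p : ZMod 2 × ZMod 2 => κ p * W p < 0)).card = 3 := by
        have i1 : (if κ (0,0) * W (0,0) < 0 then (1:ℕ) else 0) = 0 := if_neg (by linarith)
        have i2 : (if κ (0,1) * W (0,1) < 0 then (1:ℕ) else 0) = 1 := if_pos p2
        have i3 : (if κ (1,0) * W (1,0) < 0 then (1:ℕ) else 0) = 1 := if_pos p3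
        have i4 : (if κ (1,1) * W (1,1) < 0 then (1:ℕ) else 0) = 1 := if_pos p4
        rw [hcs, i1, i2, i3, i4]
      have hnot1 : ¬(∃ p : ZMod 2 × ZMod 2, W p ^ 2 = 4*x^2 ∧
          ∀ q : ZMod 2 × ZMod 2, q ≠ p → W q = 0) := by
        rintro ⟨p, _, hzz⟩
        obtain ⟨q, hq⟩ := exists_ne_pair p
        have h := hallsq q
        rw [hzz q hq] at h
        nlinarith
      exact ⟨⟨fun h1 => (hnot1 h1).elim,
          fun hp => absurd (hProd.symm.trans hp) (by nlinarith [pow_pos hx 4])⟩,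
        ⟨fun _ => hProd, fun _ => ⟨hallsq, Or.inr hcard⟩⟩,
        Or.inr hProd⟩
    · have ha' : κ (0,0) * W (0,0) = -x := by rcases hA with h|h <;> linarith
      have hb' : κ (0,1) * W (0,1) = x := by rcases hB with h|h <;> linarith
      have hc' : κ (1,0) * W (1,0) = -x := by rcases hC with h|h <;> linarith
      have hd' : κ (1,1) * W (1,1) = -x := by rcases hD with h|h <;> linarith
      have hallsq : ∀ p : ZMod 2 × ZMod 2, W p ^ 2 = x^2 := by
        intro p
        rw [hgad]
        rcases pair_cases p with rfl|rfl|rfl|rfl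
        · rw [ha']; try ring
        · rw [hb']; try ring
        · rw [hc']; try ring
        · rw [hd']; try ring
      have hProd : T 0 0 * T 0 1 * (T 1 0 * T 1 1) = -(16*x^4) := by
        rw [h00, h01, h10, h11, ha', hb', hc', hd']; ring
      have hcard : (Finset.univ.filter (fun p : ZMod 2 × ZMod 2 => κ p * W p < 0)).card = 3 := by
        have i1 : (if κ (0,0) * W (0,0) < 0 then (1:ℕ) else 0) = 1 := if_pos p1
        have i2 : (if κ (0,1) * W (0,1) < 0 then (1:ℕ) else 0) = 0 := if_neg (by linarith)
        have i3 : (if κ (1,0) * W (1,0) < 0 then (1:ℕ) else 0) = 1 := if_pos p3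
        have i4 : (if κ (1,1) * W (1,1) < 0 then (1:ℕ) else 0) = 1 := if_pos p4
        rw [hcs, i1, i2, i3, i4]
      have hnot1 : ¬(∃ p : ZMod 2 × ZMod 2, W p ^ 2 = 4*x^2 ∧
          ∀ q : ZMod 2 × ZMod 2, q ≠ p → W q = 0) := by
        rintro ⟨p, _, hzz⟩
        obtain ⟨q, hq⟩ := exists_ne_pair p
        have h := hallsq q
        rw [hzz q hq] at h
        nlinarith
      exact ⟨⟨fun h1 => (hnot1 h1).elim,
          fun hp => absurd (hProd.symm.trans hp) (by nlinarith [pow_pos hx 4])⟩,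
        ⟨fun _ => hProd, fun _ => ⟨hallsq, Or.inr hcard⟩⟩,
        Or.inr hProd⟩
    · have ha' : κ (0,0) * W (0,0) = -x := by rcases hA with h|h <;> linarith
      have hb' : κ (0,1) * W (0,1) = -x := by rcases hB with h|h <;> linarith
      have hc' : κ (1,0) * W (1,0) = x := by rcases hC with h|h <;> linarith
      have hd' : κ (1,1) * W (1,1) = -x := by rcases hD with h|h <;> linarith
      have hallsq : ∀ p : ZMod 2 × ZMod 2, W p ^ 2 = x^2 := by
        intro p
        rw [hgad]
        rcases pair_cases p with rfl|rfl|rfl|rfl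
        · rw [ha']; try ring
        · rw [hb']; try ring
        · rw [hc']; try ring
        · rw [hd']; try ring
      have hProd : T 0 0 * T 0 1 * (T 1 0 * T 1 1) = -(16*x^4) := by
        rw [h00, h01, h10, h11, ha', hb', hc', hd']; ring
      have hcard : (Finset.univ.filter (fun p : ZMod 2 × ZMod 2 => κ p * W p < 0)).card = 3 := by
        have i1 : (if κ (0,0) * W (0,0) < 0 then (1:ℕ) else 0) = 1 := if_pos p1
        have i2 : (if κ (0,1) * W (0,1) < 0 then (1:ℕ) else 0) = 1 := if_pos p2
        have i3 : (if κ (1,0) * W (1,0) < 0 then (1:ℕ) else 0) = 0 := if_neg (by linarith)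
        have i4 : (if κ (1,1) * W (1,1) < 0 then (1:ℕ) else 0) = 1 := if_pos p4
        rw [hcs, i1, i2, i3, i4]
      have hnot1 : ¬(∃ p : ZMod 2 × ZMod 2, W p ^ 2 = 4*x^2 ∧
          ∀ q : ZMod 2 × ZMod 2, q ≠ p → W q = 0) := by
        rintro ⟨p, _, hzz⟩
        obtain ⟨q, hq⟩ := exists_ne_pair p
        have h := hallsq q
        rw [hzz q hq] at h
        nlinarith
      exact ⟨⟨fun h1 => (hnot1 h1).elim,
          fun hp => absurd (hProd.symm.trans hp) (by nlinarith [pow_pos hx 4])⟩,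
        ⟨fun _ => hProd, fun _ => ⟨hallsq, Or.inr hcard⟩⟩,
        Or.inr hProd⟩
    · have ha' : κ (0,0) * W (0,0) = -x := by rcases hA with h|h <;> linarith
      have hb' : κ (0,1) * W (0,1) = -x := by rcases hB with h|h <;> linarith
      have hc' : κ (1,0) * W (1,0) = -x := by rcases hC with h|h <;> linarith
      have hd' : κ (1,1) * W (1,1) = x := by rcases hD with h|h <;> linarith
      have hallsq : ∀ p : ZMod 2 × ZMod 2, W p ^ 2 = x^2 := by
        intro p
        rw [hgad]
        rcases pair_cases p with rfl|rfl|rfl|rfl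
        · rw [ha']; try ring
        · rw [hb']; try ring
        · rw [hc']; try ring
        · rw [hd']; try ring
      have hProd : T 0 0 * T 0 1 * (T 1 0 * T 1 1) = -(16*x^4) := by
        rw [h00, h01, h10, h11, ha', hb', hc', hd']; ring
      have hcard : (Finset.univ.filter (fun p : ZMod 2 × ZMod 2 => κ p * W p < 0)).card = 3 := by
        have i1 : (if κ (0,0) * W (0,0) < 0 then (1:ℕ) else 0) = 1 := if_pos p1
        have i2 : (if κ (0,1) * W (0,1) < 0 then (1:ℕ) else 0) = 1 := if_pos p2
        have i3 : (if κ (1,0) * W (1,0) < 0 then (1:ℕ) else 0) = 1 := if_pos p3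
        have i4 : (if κ (1,1) * W (1,1) < 0 then (1:ℕ) else 0) = 0 := if_neg (by linarith)
        rw [hcs, i1, i2, i3, i4]
      have hnot1 : ¬(∃ p : ZMod 2 × ZMod 2, W p ^ 2 = 4*x^2 ∧
          ∀ q : ZMod 2 × ZMod 2, q ≠ p → W q = 0) := by
        rintro ⟨p, _, hzz⟩
        obtain ⟨q, hq⟩ := exists_ne_pair p
        have h := hallsq q
        rw [hzz q hq] at h
        nlinarith
      exact ⟨⟨fun h1 => (hnot1 h1).elim,
          fun hp => absurd (hProd.symm.trans hp) (by nlinarith [pow_pos hx 4])⟩,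
        ⟨fun _ => hProd, fun _ => ⟨hallsq, Or.inr hcard⟩⟩,
        Or.inr hProd⟩
theorem walsh_restriction_dichotomy (n : ℕ) (hn : Even n) (hn4 : 4 ≤ n)
    (Q : (Fin n → ZMod 2) → ZMod 2)
    (hQ0 : Q 0 = 0)
    (hbil : ∀ x x' y : Fin n → ZMod 2,
      Q (x + x' + y) + Q (x + x') + Q y =
        (Q (x + y) + Q x + Q y) + (Q (x' + y) + Q x' + Q y))
    (hbent : IsBent n Q) (i j : Fin n) (hij : i < j) (c : Fin n → ZMod 2) :
    ((∃ p : ZMod 2 × ZMod 2,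
        (walshOn (restrictQ n Q i j p.1 p.2) (fun k => c k.1)) ^ 2 = 2 ^ n ∧
        ∀ q : ZMod 2 × ZMod 2, q ≠ p →
          walshOn (restrictQ n Q i j q.1 q.2) (fun k => c k.1) = 0) ↔
      (∏ α : ZMod 2, ∏ β : ZMod 2,
        walshOn Q (c + α • eVec n i + β • eVec n j)) = 2 ^ (2 * n)) ∧
    (((∀ p : ZMod 2 × ZMod 2,
        (walshOn (restrictQ n Q i j p.1 p.2) (fun k => c k.1)) ^ 2 = 2 ^ (n - 2)) ∧
      ((Finset.univ.filter (fun p : ZMod 2 × ZMod 2 =>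
          (-1 : ℤ) ^ ((c i * p.1 + c j * p.2).val) *
            walshOn (restrictQ n Q i j p.1 p.2) (fun k => c k.1) < 0)).card = 1 ∨
       (Finset.univ.filter (fun p : ZMod 2 × ZMod 2 =>
          (-1 : ℤ) ^ ((c i * p.1 + c j * p.2).val) *
            walshOn (restrictQ n Q i j p.1 p.2) (fun k => c k.1) < 0)).card = 3)) ↔
      (∏ α : ZMod 2, ∏ β : ZMod 2,
        walshOn Q (c + α • eVec n i + β • eVec n j)) = -(2 ^ (2 * n))) ∧
    ((∏ α : ZMod 2, ∏ β : ZMod 2,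
        walshOn Q (c + α • eVec n i + β • eVec n j)) = 2 ^ (2 * n) ∨
     (∏ α : ZMod 2, ∏ β : ZMod 2,
        walshOn Q (c + α • eVec n i + β • eVec n j)) = -(2 ^ (2 * n))) := by
  have hij' : i ≠ j := Fin.ne_of_lt hij
  obtain ⟨m, hm⟩ := hn
  have hm2 : 2 ≤ m := by omega
  -- decomposition
  have hT : ∀ α β : ZMod 2, walshOn Q (c + α • eVec n i + β • eVec n j)
      = ∑ u : ZMod 2, ∑ v : ZMod 2, (-1:ℤ)^((α*u+β*v).val) *
          ((-1:ℤ)^((c i * u + c j * v).val) *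
            walshOn (restrictQ n Q i j u v) (fun k => c k.1)) := by
    intro α β
    have hci : (c + α • eVec n i + β • eVec n j) i = c i + α := by
      simp [eVec, Pi.single_eq_same, Pi.single_eq_of_ne hij']
    have hcj : (c + α • eVec n i + β • eVec n j) j = c j + β := by
      simp [eVec, Pi.single_eq_same, Pi.single_eq_of_ne hij'.symm]
    have hck : (fun k : {k : Fin n // k ≠ i ∧ k ≠ j} =>
        (c + α • eVec n i + β • eVec n j) k.1) = fun k => c k.1 := by
      funext k
      simp [eVec, Pi.single_eq_of_ne k.2.1, Pi.single_eq_of_ne k.2.2]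
    rw [walsh_decomp n Q i j hij' (c + α • eVec n i + β • eVec n j)]
    refine Finset.sum_congr rfl fun u _ => Finset.sum_congr rfl fun v _ => ?_
    rw [hci, hcj, hck]
    have harg : (c i + α) * u + (c j + β) * v
        = (α*u+β*v) + (c i * u + c j * v) := by ring
    rw [harg, chi_add, mul_assoc]
  -- constants
  have hx : (0:ℤ) < 2^(m-1) := by positivity
  have hpow1 : (2:ℤ)^(n/2) = 2*2^(m-1) := by
    rw [show n/2 = (m-1)+1 by omega, pow_succ]; ring
  have hc1 : (2:ℤ)^(2*n) = 16*((2:ℤ)^(m-1))^4 := by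
    rw [show 2*n = (m-1)*4+4 by omega, pow_add, pow_mul]; ring
  have hc2 : (2:ℤ)^n = 4*((2:ℤ)^(m-1))^2 := by
    rw [show n = (m-1)*2+2 by omega, pow_add, pow_mul]; ring
  have hc3 : (2:ℤ)^(n-2) = ((2:ℤ)^(m-1))^2 := by
    rw [show n-2 = (m-1)*2 by omega, pow_mul]
  have hbent' : ∀ α β : ZMod 2, walshOn Q (c + α • eVec n i + β • eVec n j) = 2*2^(m-1) ∨
      walshOn Q (c + α • eVec n i + β • eVec n j) = -(2*2^(m-1)) := by
    intro α β
    rcases hbent (c + α • eVec n i + β • eVec n j) with h|h <;> rw [hpow1] at h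
    · exact Or.inl h
    · exact Or.inr (by linarith)
  have hκ : ∀ p : ZMod 2 × ZMod 2,
      (-1:ℤ)^((c i * p.1 + c j * p.2).val) = 1 ∨
      (-1:ℤ)^((c i * p.1 + c j * p.2).val) = -1 := by
    intro p
    have : ∀ z : ZMod 2, (-1:ℤ)^z.val = 1 ∨ (-1:ℤ)^z.val = -1 := by decide
    exact this _
  have h00 : walshOn Q (c + (0:ZMod 2) • eVec n i + (0:ZMod 2) • eVec n j)
      = ((-1:ℤ)^((c i * 0 + c j * 0).val) * walshOn (restrictQ n Q i j 0 0) (fun k => c k.1)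
          + (-1:ℤ)^((c i * 0 + c j * 1).val) * walshOn (restrictQ n Q i j 0 1) (fun k => c k.1))
        + ((-1:ℤ)^((c i * 1 + c j * 0).val) * walshOn (restrictQ n Q i j 1 0) (fun k => c k.1)
          + (-1:ℤ)^((c i * 1 + c j * 1).val) * walshOn (restrictQ n Q i j 1 1) (fun k => c k.1)) := by
    rw [hT 0 0, sumZ]
    rw [sumZ, sumZ]
    norm_num [show ((0:ZMod 2)).val = 0 from rfl]
  have h01 : walshOn Q (c + (0:ZMod 2) • eVec n i + (1:ZMod 2) • eVec n j)
      = ((-1:ℤ)^((c i * 0 + c j * 0).val) * walshOn (restrictQ n Q i j 0 0) (fun k => c k.1)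
          - (-1:ℤ)^((c i * 0 + c j * 1).val) * walshOn (restrictQ n Q i j 0 1) (fun k => c k.1))
        + ((-1:ℤ)^((c i * 1 + c j * 0).val) * walshOn (restrictQ n Q i j 1 0) (fun k => c k.1)
          - (-1:ℤ)^((c i * 1 + c j * 1).val) * walshOn (restrictQ n Q i j 1 1) (fun k => c k.1)) := by
    rw [hT 0 1, sumZ]
    rw [sumZ, sumZ]
    norm_num [show ((0:ZMod 2)).val = 0 from rfl, show ((1:ZMod 2)).val = 1 from rfl]
    ring
  have h10 : walshOn Q (c + (1:ZMod 2) • eVec n i + (0:ZMod 2) • eVec n j)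
      = ((-1:ℤ)^((c i * 0 + c j * 0).val) * walshOn (restrictQ n Q i j 0 0) (fun k => c k.1)
          + (-1:ℤ)^((c i * 0 + c j * 1).val) * walshOn (restrictQ n Q i j 0 1) (fun k => c k.1))
        - ((-1:ℤ)^((c i * 1 + c j * 0).val) * walshOn (restrictQ n Q i j 1 0) (fun k => c k.1)
          + (-1:ℤ)^((c i * 1 + c j * 1).val) * walshOn (restrictQ n Q i j 1 1) (fun k => c k.1)) := by
    rw [hT 1 0, sumZ]
    rw [sumZ, sumZ]
    norm_num [show ((0:ZMod 2)).val = 0 from rfl, show ((1:ZMod 2)).val = 1 from rfl]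
    ring
  have h11 : walshOn Q (c + (1:ZMod 2) • eVec n i + (1:ZMod 2) • eVec n j)
      = ((-1:ℤ)^((c i * 0 + c j * 0).val) * walshOn (restrictQ n Q i j 0 0) (fun k => c k.1)
          - (-1:ℤ)^((c i * 0 + c j * 1).val) * walshOn (restrictQ n Q i j 0 1) (fun k => c k.1))
        - ((-1:ℤ)^((c i * 1 + c j * 0).val) * walshOn (restrictQ n Q i j 1 0) (fun k => c k.1)
          - (-1:ℤ)^((c i * 1 + c j * 1).val) * walshOn (restrictQ n Q i j 1 1) (fun k => c k.1)) := by
    rw [hT 1 1, sumZ]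
    rw [sumZ, sumZ]
    norm_num [show ((0:ZMod 2)).val = 0 from rfl, show ((1:ZMod 2)).val = 1 from rfl,
      show ((1:ZMod 2))+1 = 0 from rfl, show ZMod.val (2:ZMod 2) = 0 from rfl]
    ring
  simp only [prodZ, hc1, hc2, hc3]
  exact abstract_dichotomy ((2:ℤ)^(m-1)) hx
    (fun p => walshOn (restrictQ n Q i j p.1 p.2) (fun k => c k.1))
    (fun p => (-1:ℤ)^((c i * p.1 + c j * p.2).val))
    hκ
    (fun α β => walshOn Q (c + α • eVec n i + β • eVec n j))
    h00 h01 h10 h11 hbent'
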